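/- arXiv:1508.01360 — 2 statements merged into one kernel-verified Lean document; each statement's English description precedes it below -/
import Mathlib

section
/- (Theorem 2.) Let 0 < m_1 < … < m_t be integers and let d be any integer with 0 ≤ d < m_1. Then every codeword w of the multi-delimiter code D_{m_1,…,m_t} can be written as a concatenation w = g_1 g_2 ⋯ g_r of a nonempty finite sequence of binary words, where each g_j has the form c ++ 1^{k-1}0 for some integer k ≥ 1 and some binary word c which is either the one-letter word 0 or a word of length d+1 whose first letter is 1. (In particular, D_{m_1,…,m_t} is a (Δ,k)-code.) -/
/-- The word `1^mi 0`. -/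
def shortWord (mi : ℕ) : List Bool := List.replicate mi true ++ [false]

/-- The delimiter `0 1^mi 0`. -/
def delim (mi : ℕ) : List Bool := false :: (List.replicate mi true ++ [false])

/-- The multi-delimiter code `D_{m_1,…,m_t}`. -/
def MultiDelim {t : ℕ} (m : Fin t → ℕ) : Set (List Bool) :=
  {w | (∃ i, w = shortWord (m i)) ∨
    ((∀ i, ¬ shortWord (m i) <+: w) ∧
     (∃ i, delim (m i) <:+ w) ∧
     (∀ i u v, w = u ++ delim (m i) ++ v → v = []))}

/-- A `(Δ,k)`-group. -/
def IsGroup (d : ℕ) (g : List Bool) : Prop :=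
  ∃ (c : List Bool) (k : ℕ), 1 ≤ k ∧
    (c = [false] ∨ (c.length = d + 1 ∧ c.head? = some true)) ∧
    g = c ++ List.replicate (k - 1) true ++ [false]

lemma suffix_of_suffix_length_le' {α : Type*} {l₁ l₂ l : List α}
    (h1 : l₁ <:+ l) (h2 : l₂ <:+ l) (h : l₁.length ≤ l₂.length) : l₁ <:+ l₂ := by
  rw [← List.reverse_prefix] at h1 h2 ⊢
  exact List.prefix_of_prefix_length_le h1 h2 (by simpa)

lemma split_ones (v : List Bool) (hv : false ∈ v) :
    ∃ j v', v = List.replicate j true ++ false :: v' := by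
  have hd : v.dropWhile id ≠ [] := by
    intro h
    rw [List.dropWhile_eq_nil_iff] at h
    simpa using h false hv
  refine ⟨(v.takeWhile id).length, (v.dropWhile id).tail, ?_⟩
  have h1 : v.takeWhile id = List.replicate (v.takeWhile id).length true :=
    List.eq_replicate_iff.mpr ⟨rfl, fun b hb => by simpa using List.mem_takeWhile_imp hb⟩
  have h2 : v.dropWhile id = false :: (v.dropWhile id).tail := by
    have hh := List.head_dropWhile_not id (l := v) hd
    simp only [id_eq] at hh
    conv_lhs => rw [← List.cons_head_tail hd, hh]
  conv_lhs => rw [← List.takeWhile_append_dropWhile (p := id) (l := v)]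
  rw [← h1, ← h2]

/-- A short suffix of `w` preceded by a `0` and ending with `0` must be `1^M 0`. -/
lemma short_suffix (M : ℕ) {w v : List Bool} (hw : delim M <:+ w)
    (hv : (false :: v) <:+ w) (hv2 : ∃ v₀, v = v₀ ++ [false])
    (hlen : v.length + 1 ≤ M + 2) : v = List.replicate M true ++ [false] := by
  obtain ⟨v₀, rfl⟩ := hv2
  have h : (false :: (v₀ ++ [false])) <:+ delim M := by
    apply suffix_of_suffix_length_le' hv hw
    simp only [delim, List.length_cons, List.length_append, List.length_replicate] at hlen ⊢
    omega
  rw [delim] at h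
  rcases List.suffix_cons_iff.mp h with h | h
  · simpa using h
  · exfalso
    have h' := List.reverse_prefix.mpr h
    simp only [List.reverse_cons, List.reverse_append, List.reverse_replicate,
      List.reverse_nil, List.nil_append, List.cons_append, List.append_assoc] at h'
    have hmem : (false : Bool) ∈ List.replicate M true :=
      (List.cons_prefix_cons.mp h').2.subset (by simp)
    simpa using List.eq_of_mem_replicate hmem

lemma parse (d M : ℕ) (hM : d < M) (w : List Bool) (hw : delim M <:+ w) :
    ∀ n v, v.length ≤ n → v <:+ w → (v = w ∨ (false :: v) <:+ w) →
      ∃ gs : List (List Bool), v = gs.flatten ∧ ∀ g ∈ gs, IsGroup d g := by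
  have hwlast : ∃ w₀, w = w₀ ++ [false] := by
    obtain ⟨u, hu⟩ := hw
    exact ⟨u ++ (false :: List.replicate M true), by rw [← hu]; simp [delim]⟩
  intro n
  induction n with
  | zero =>
    intro v hlen _ _
    exact ⟨[], by simpa using List.length_eq_zero_iff.mp (Nat.le_zero.mp hlen), by simp⟩
  | succ n ih =>
    intro v hlen hsuf hpre
    obtain (rfl | ⟨v₀, a, rfl⟩) := v.eq_nil_or_concat
    · exact ⟨[], by simp, by simp⟩
    simp only [List.concat_eq_append] at hlen hsuf hpre ⊢
    have ha : a = false := by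
      obtain ⟨u, hu⟩ := hsuf
      obtain ⟨w₀, hw0⟩ := hwlast
      have h1 : w.getLast? = some a := by
        rw [← hu, ← List.append_assoc]
        simp
      have h2 : w.getLast? = some false := by rw [hw0]; simp
      simpa using h1.symm.trans h2
    subst ha
    match v₀ with
    | [] =>
      exfalso
      rcases hpre with hpre | hpre
      · have h := hw.length_le
        rw [← hpre] at h
        simp only [delim, List.length_cons, List.length_append, List.length_replicate,
          List.nil_append] at h
        omega
      · have h := short_suffix M hw hpre ⟨[], rfl⟩
          (by simp only [List.nil_append, List.length_cons, List.length_nil]; omega)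
        have h2 := congrArg List.length h
        simp at h2
        omega
    | false :: v₀' =>
      obtain ⟨j, v', hsplit⟩ := split_ones (v₀' ++ [false]) (by simp)
      have hveq : (false :: v₀') ++ [false]
          = (false :: (List.replicate j true ++ [false])) ++ v' := by
        simp only [List.cons_append, hsplit]
        simp
      have hv'sufv : (false :: v') <:+ (false :: v₀') ++ [false] :=
        ⟨false :: List.replicate j true, by rw [hveq]; simp⟩
      have hv'suf : (false :: v') <:+ w := hv'sufv.trans hsuf
      have hv'len : v'.length ≤ n := by
        have h := hv'sufv.length_le
        simp at h hlen
        omega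
      obtain ⟨gs, hgs1, hgs2⟩ := ih v' hv'len ((List.suffix_cons false v').trans hv'suf)
        (Or.inr hv'suf)
      refine ⟨(false :: (List.replicate j true ++ [false])) :: gs, ?_, ?_⟩
      · rw [List.flatten_cons, ← hgs1, ← hveq]
      · intro g' hg'
        rcases List.mem_cons.mp hg' with rfl | hg'
        · exact ⟨[false], j + 1, by omega, Or.inl rfl, by simp⟩
        · exact hgs2 _ hg'
    | true :: v₀' =>
      have hlen2 : d + 2 ≤ ((true :: v₀') ++ [false]).length := by
        rcases hpre with hpre | hpre
        · have h := hw.length_le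
          rw [← hpre] at h
          simp only [delim, List.length_cons, List.length_append,
            List.length_replicate] at h ⊢
          omega
        · by_contra hlt
          push_neg at hlt
          have h := short_suffix M hw hpre ⟨true :: v₀', rfl⟩
            (by simp only [List.cons_append, List.length_cons, List.length_append,
                  List.length_nil] at hlt ⊢
                omega)
          have h2 := congrArg List.length h
          simp at h2
          simp at hlt
          omega
      have hv0len : d ≤ v₀'.length := by
        simp only [List.cons_append, List.length_cons, List.length_append,
          List.length_nil] at hlen2
        omega
      obtain ⟨j, v', hsplit⟩ := split_ones (v₀'.drop d ++ [false]) (by simp)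
      have hveq : (true :: v₀') ++ [false]
          = ((true :: v₀'.take d) ++ List.replicate j true ++ [false]) ++ v' := by
        conv_lhs => rw [← List.take_append_drop d v₀']
        simp only [List.cons_append, List.append_assoc, hsplit]
        simp
      have hv'sufv : (false :: v') <:+ (true :: v₀') ++ [false] :=
        ⟨(true :: v₀'.take d) ++ List.replicate j true, by rw [hveq]; simp⟩
      have hv'suf : (false :: v') <:+ w := hv'sufv.trans hsuf
      have hv'len : v'.length ≤ n := by
        have h := hv'sufv.length_le
        simp at h hlen
        omega
      obtain ⟨gs, hgs1, hgs2⟩ := ih v' hv'len ((List.suffix_cons false v').trans hv'suf)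
        (Or.inr hv'suf)
      refine ⟨((true :: v₀'.take d) ++ List.replicate j true ++ [false]) :: gs, ?_, ?_⟩
      · rw [List.flatten_cons, ← hgs1, ← hveq]
      · intro g' hg'
        rcases List.mem_cons.mp hg' with rfl | hg'
        · refine ⟨true :: v₀'.take d, j + 1, by omega,
            Or.inr ⟨?_, rfl⟩, by simp⟩
          simp only [List.length_cons, List.length_take]
          omega
        · exact hgs2 _ hg'

/-- Theorem 2: for `0 < m_1 < … < m_t` and any `0 ≤ d < m_1`, every
codeword of `D_{m_1,…,m_t}` is a concatenation of a nonempty sequence of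
`(Δ,k)`-groups `c ++ 1^{k-1} 0`, where `k ≥ 1` and `c` is either the one-letter
word `0` or a word of length `d+1` starting with `1`. -/
theorem multiDelim_is_deltaK_code {t : ℕ} (ht : 0 < t) (m : Fin t → ℕ)
    (hpos : ∀ i, 0 < m i) (hmono : StrictMono m)
    (d : ℕ) (hd : d < m ⟨0, ht⟩) :
    ∀ w ∈ MultiDelim m, ∃ gs : List (List Bool), gs ≠ [] ∧ w = gs.flatten ∧
      ∀ g ∈ gs, ∃ (c : List Bool) (k : ℕ), 1 ≤ k ∧
        (c = [false] ∨ (c.length = d + 1 ∧ c.head? = some true)) ∧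
        g = c ++ List.replicate (k - 1) true ++ [false] := by
  intro w hw
  have hdm : ∀ i, d < m i := fun i =>
    lt_of_lt_of_le hd (hmono.monotone (by simp [Fin.le_def]))
  rcases hw with ⟨i, rfl⟩ | ⟨-, ⟨i, hdel⟩, -⟩
  · -- shortWord case
    have hdi := hdm i
    refine ⟨[shortWord (m i)], by simp, by simp, ?_⟩
    intro g hg
    rcases List.mem_singleton.mp hg with rfl
    refine ⟨List.replicate (d + 1) true, m i - d, by omega,
      Or.inr ⟨by simp, by rw [List.replicate_succ]; simp⟩, ?_⟩
    rw [shortWord, show m i - d - 1 = m i - (d + 1) by omega, ← List.replicate_add]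
    congr 2
    omega
  · -- general case
    have hdi := hdm i
    obtain ⟨gs, hgs1, hgs2⟩ := parse d (m i) hdi w hdel w.length w le_rfl
      (List.suffix_refl w) (Or.inl rfl)
    refine ⟨gs, ?_, hgs1, fun g hg => hgs2 g hg⟩
    rintro rfl
    simp only [List.flatten_nil] at hgs1
    subst hgs1
    have h := hdel.length_le
    simp only [delim, List.length_cons, List.length_append, List.length_replicate,
      List.length_nil] at h
    omega
end

section
/- For any integers 0 < m_1 < … < m_t, the number f_n of codewords of length n in the multi-delimiter code D_{m_1,…,m_t} satisfies, for every n ≥ 1, the recurrence f_n = T_n + ∑_{k=0}^{n−2} (2 − T_{n−k}) f_k, where f_0 = 0 and T_j denotes the number of elements of the multiset {m_1+1, m_1+2, …, m_t+1, m_t+2} equal to j (so T_j ∈ {0,1,2}). -/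
/-- `fD m n` is the number of codewords of `D_{m_1,…,m_t}` of length `n`. -/
noncomputable def fD {t : ℕ} (m : Fin t → ℕ) (n : ℕ) : ℕ :=
  Set.ncard {w ∈ MultiDelim m | w.length = n}

/-- `TD m j` is the number of elements of the multiset
`{m_1+1, m_1+2, …, m_t+1, m_t+2}` equal to `j`. -/
def TD {t : ℕ} (m : Fin t → ℕ) (j : ℕ) : ℕ :=
  (Finset.univ.filter fun i => m i + 1 = j).card +
  (Finset.univ.filter fun i => m i + 2 = j).card

open List

lemma runDecomp : ∀ v : List Bool,
    (∃ a, v = List.replicate a true) ∨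
    (∃ a v', v = List.replicate a true ++ false :: v') := by
  intro v
  induction v with
  | nil => exact Or.inl ⟨0, rfl⟩
  | cons c v ih =>
    cases c with
    | false => exact Or.inr ⟨0, v, rfl⟩
    | true =>
      rcases ih with ⟨a, rfl⟩ | ⟨a, v', rfl⟩
      · exact Or.inl ⟨a + 1, by simp [List.replicate_succ]⟩
      · exact Or.inr ⟨a + 1, v', by simp [List.replicate_succ]⟩

lemma L1 : ∀ {a : ℕ} {y u r : List Bool},
    List.replicate a true ++ false :: y = u ++ false :: r →
    ∃ u', u = List.replicate a true ++ u' ∧ false :: y = u' ++ false :: r := by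
  intro a
  induction a with
  | zero => intro y u r h; exact ⟨u, by simp, by simpa using h⟩
  | succ a ih =>
    intro y u r h
    cases u with
    | nil => simp [List.replicate_succ] at h
    | cons c u₀ =>
      simp only [List.replicate_succ, List.cons_append, List.cons.injEq] at h
      obtain ⟨rfl, h⟩ := h
      obtain ⟨u', rfl, h2⟩ := ih h
      exact ⟨u', by simp [List.replicate_succ], h2⟩

lemma FF : ∀ {a b : ℕ} {y z : List Bool},
    List.replicate a true ++ false :: y = List.replicate b true ++ false :: z →
    a = b ∧ y = z := by
  intro a
  induction a with
  | zero =>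
    intro b y z h
    cases b with
    | zero => simpa using h
    | succ b => simp [List.replicate_succ] at h
  | succ a ih =>
    intro b y z h
    cases b with
    | zero => simp [List.replicate_succ] at h
    | succ b =>
      simp only [List.replicate_succ, List.cons_append, List.cons.injEq] at h
      obtain ⟨-, h⟩ := h
      obtain ⟨h1, h2⟩ := ih h
      exact ⟨by omega, h2⟩

def NoRun {t : ℕ} (m : Fin t → ℕ) (a : ℕ) : Prop := ∀ i, m i ≠ a

instance {t : ℕ} (m : Fin t → ℕ) (a : ℕ) : Decidable (NoRun m a) := by
  unfold NoRun; infer_instance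

inductive Stem {t : ℕ} (m : Fin t → ℕ) : List Bool → Prop
  | ones (a : ℕ) (h : NoRun m a) : Stem m (List.replicate a true)
  | cons (a : ℕ) (h : NoRun m a) (v : List Bool) (hv : Stem m v) :
      Stem m (List.replicate a true ++ false :: v)

def gS {t : ℕ} (m : Fin t → ℕ) : ℕ → ℕ
  | d => (if NoRun m d then 1 else 0) +
      ∑ a ∈ (Finset.range d).attach,
        if NoRun m a.1 then gS m (d - 1 - a.1) else 0
  decreasing_by
    · have := a.2; simp only [Finset.mem_range] at this; omega

lemma gS_eq {t : ℕ} (m : Fin t → ℕ) (d : ℕ) :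
    gS m d = (if NoRun m d then 1 else 0) +
      ∑ a ∈ Finset.range d, if NoRun m a then gS m (d - 1 - a) else 0 := by
  rw [gS]
  congr 1
  exact Finset.sum_attach _ (fun a => if NoRun m a then gS m (d - 1 - a) else 0)

def stemF {t : ℕ} (m : Fin t → ℕ) : ℕ → Finset (List Bool)
  | d => (if NoRun m d then {List.replicate d true} else ∅) ∪
      (Finset.range d).attach.biUnion (fun a =>
        if NoRun m a.1 then
          (stemF m (d - 1 - a.1)).image (fun v => List.replicate a.1 true ++ false :: v)
        else ∅)
  decreasing_by
    · have := a.2; simp only [Finset.mem_range] at this; omega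

lemma mem_stemF {t : ℕ} (m : Fin t → ℕ) : ∀ (d : ℕ) (v : List Bool),
    v ∈ stemF m d ↔ Stem m v ∧ v.length = d := by
  intro d
  induction d using Nat.strong_induction_on with
  | _ d ih =>
    intro v
    rw [stemF]
    simp only [Finset.mem_union]
    constructor
    · rintro (h1 | h2)
      · split at h1
        · next h =>
          simp only [Finset.mem_singleton] at h1
          subst h1
          exact ⟨Stem.ones d h, by simp⟩
        · simp at h1
      · simp only [Finset.mem_biUnion, Finset.mem_attach, true_and] at h2
        obtain ⟨a, ha⟩ := h2
        have had : a.1 < d := Finset.mem_range.mp a.2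
        split at ha
        · next h =>
          simp only [Finset.mem_image] at ha
          obtain ⟨v₀, hv₀, rfl⟩ := ha
          obtain ⟨hs, hl⟩ := (ih _ (by omega) v₀).mp hv₀
          refine ⟨Stem.cons a.1 h v₀ hs, ?_⟩
          simp [hl]; omega
        · simp at ha
    · rintro ⟨hs, rfl⟩
      cases hs with
      | ones a h =>
        left
        simp only [List.length_replicate]
        rw [if_pos h]
        simp
      | cons a h v₀ hv₀ =>
        right
        have hlen : (List.replicate a true ++ false :: v₀).length = a + 1 + v₀.length := by
          simp; omega
        rw [hlen]
        refine Finset.mem_biUnion.mpr ⟨⟨a, Finset.mem_range.mpr (by omega)⟩,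
          Finset.mem_attach _ _, ?_⟩
        rw [if_pos h]
        refine Finset.mem_image.mpr ⟨v₀, (ih _ (by omega) v₀).mpr ⟨hv₀, show v₀.length = a + 1 + v₀.length - 1 - a by omega⟩, rfl⟩

lemma card_stemF {t : ℕ} (m : Fin t → ℕ) : ∀ d : ℕ, (stemF m d).card = gS m d := by
  intro d
  induction d using Nat.strong_induction_on with
  | _ d ih =>
    rw [stemF, gS_eq]
    rw [Finset.card_union_of_disjoint]
    · congr 1
      · split <;> simp
      · rw [Finset.card_biUnion]
        · rw [← Finset.sum_attach (Finset.range d)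
            (fun a => if NoRun m a then gS m (d - 1 - a) else 0)]
          refine Finset.sum_congr rfl fun a _ => ?_
          have had : a.1 < d := Finset.mem_range.mp a.2
          split
          · next h =>
            rw [Finset.card_image_of_injective]
            · exact ih _ (by omega)
            · intro v w hvw
              have := List.append_cancel_left hvw
              simpa using this
          · simp
        · intro x _ y _ hxy
          simp only [Function.onFun]
          by_cases hx : NoRun m x.1
          · by_cases hy : NoRun m y.1
            · rw [if_pos hx, if_pos hy, Finset.disjoint_left]
              rintro z hz1 hz2
              simp only [Finset.mem_image] at hz1 hz2
              obtain ⟨v₁, -, rfl⟩ := hz1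
              obtain ⟨v₂, -, he⟩ := hz2
              exact hxy (Subtype.ext (FF he.symm).1)
            · rw [if_neg hy]; simp
          · rw [if_neg hx]; simp
    · rw [Finset.disjoint_left]
      intro z hz1 hz2
      have hz : z = List.replicate d true := by
        split at hz1
        · simpa using hz1
        · simp at hz1
      simp only [Finset.mem_biUnion] at hz2
      obtain ⟨a, -, ha⟩ := hz2
      split at ha
      · simp only [Finset.mem_image] at ha
        obtain ⟨v₀, -, he⟩ := ha
        have : false ∈ z := by rw [← he]; simp
        rw [hz] at this
        exact absurd (List.eq_of_mem_replicate this) (by simp)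
      · simp at ha

section Char
variable {t : ℕ} {m : Fin t → ℕ}

lemma stem_no_inner {v : List Bool} (hv : Stem m v) (i : Fin t) :
    ∀ (j : Fin t) (u x : List Bool),
      v ++ delim (m i) = u ++ delim (m j) ++ x → x = [] := by
  induction hv with
  | ones a h =>
    intro j u x eq
    simp only [delim, List.cons_append, List.append_assoc, List.singleton_append] at eq
    obtain ⟨u', -, h2⟩ := L1 eq
    cases u' with
    | nil =>
      simp only [List.nil_append, List.cons.injEq, true_and] at h2
      exact ((FF h2).2).symm
    | cons c u'' =>
      simp only [List.cons_append, List.cons.injEq] at h2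
      obtain ⟨-, h2⟩ := h2
      obtain ⟨u₃, -, h5⟩ := L1 h2
      cases u₃ with
      | nil =>
        simp only [List.nil_append, List.cons.injEq, true_and] at h5
        exact absurd h5.symm (by simp)
      | cons c₃ u₄ =>
        simp only [List.cons_append, List.cons.injEq] at h5
        exact absurd h5.2.symm (by simp)
  | cons a h v₀ hv₀ ih =>
    intro j u x eq
    simp only [delim, List.cons_append, List.append_assoc, List.singleton_append] at eq
    obtain ⟨u', -, h2⟩ := L1 eq
    cases u' with
    | nil =>
      simp only [List.nil_append, List.cons.injEq, true_and] at h2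
      cases hv₀ with
      | ones b hb => exact absurd (FF h2).1.symm (hb j)
      | cons b hb v₁ hv₁ =>
        simp only [List.append_assoc, List.cons_append] at h2
        exact absurd (FF h2).1.symm (hb j)
    | cons c u'' =>
      simp only [List.cons_append, List.cons.injEq] at h2
      obtain ⟨-, h2⟩ := h2
      refine ih j u'' x ?_
      simpa only [delim, List.cons_append, List.append_assoc, List.singleton_append] using h2

lemma stem_no_short {v : List Bool} (hv : Stem m v) (i j : Fin t) :
    ¬ shortWord (m j) <+: v ++ delim (m i) := by
  rintro ⟨y, hy⟩
  simp only [shortWord, delim, List.cons_append, List.append_assoc,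
    List.singleton_append] at hy
  cases hv with
  | ones a h => exact absurd (FF hy).1 (h j)
  | cons a h v₀ hv₀ =>
    simp only [List.append_assoc, List.cons_append] at hy
    exact absurd (FF hy).1 (h j)

lemma stem_codeword {v : List Bool} (hv : Stem m v) (i : Fin t) :
    v ++ delim (m i) ∈ MultiDelim m :=
  Or.inr ⟨fun j => stem_no_short hv i j, ⟨i, List.suffix_append v (delim (m i))⟩,
    fun j u x hx => stem_no_inner hv i j u x hx⟩

lemma stem_of_code : ∀ (n : ℕ) (v : List Bool), v.length = n → ∀ (i : Fin t),
    (∀ j, ¬ shortWord (m j) <+: v ++ delim (m i)) →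
    (∀ j u x, v ++ delim (m i) = u ++ delim (m j) ++ x → x = []) →
    Stem m v := by
  intro n
  induction n using Nat.strong_induction_on with
  | _ n ih =>
    intro v hlen i hpre hocc
    rcases runDecomp v with ⟨a, rfl⟩ | ⟨a, v', rfl⟩
    · refine Stem.ones a (fun j hj => hpre j ?_)
      exact ⟨List.replicate (m i) true ++ [false],
        by simp [shortWord, delim, hj]⟩
    · have hNR : NoRun m a := by
        intro j hj
        refine hpre j ⟨v' ++ delim (m i), ?_⟩
        simp [shortWord, hj]
      refine Stem.cons a hNR v' ?_
      refine ih v'.length (by simp at hlen; omega) v' rfl i ?_ ?_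
      · rintro j ⟨y, hy⟩
        have hw : (List.replicate a true ++ false :: v') ++ delim (m i)
            = List.replicate a true ++ delim (m j) ++ y := by
          simp only [delim, shortWord] at hy ⊢
          simp only [List.append_assoc, List.cons_append, List.nil_append]
          rw [← hy]
          simp
        have hy0 : y = [] := hocc j (List.replicate a true) y (by simpa using hw)
        subst hy0
        rw [List.append_nil] at hy
        rcases runDecomp v' with ⟨b, rfl⟩ | ⟨b, v'', rfl⟩
        · simp only [shortWord, delim, List.cons_append, List.append_assoc,
            List.singleton_append] at hy
          exact absurd (FF hy.symm).2 (by simp)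
        · simp only [shortWord, delim, List.cons_append, List.append_assoc,
            List.singleton_append] at hy
          exact absurd (FF hy.symm).2 (by simp)
      · intro j u x hx
        refine hocc j (List.replicate a true ++ false :: u) x ?_
        simp only [List.cons_append, List.append_assoc]
        rw [hx]
        simp

end Char
section Count
variable {t : ℕ} {m : Fin t → ℕ}

lemma delim_suffix_delim {k l : ℕ} (h : delim k <:+ delim l) : k = l := by
  obtain ⟨y, hy⟩ := h
  cases y with
  | nil =>
    simp only [List.nil_append, delim, List.cons.injEq, true_and] at hy
    exact (FF hy).1
  | cons c y₀ =>
    simp only [delim, List.cons_append, List.cons.injEq] at hy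
    obtain ⟨-, hy⟩ := hy
    obtain ⟨u₃, -, h5⟩ := L1 hy.symm
    cases u₃ with
    | nil =>
      simp only [List.nil_append, List.cons.injEq, true_and] at h5
      exact absurd h5 (by simp)
    | cons c₃ u₄ =>
      simp only [List.cons_append, List.cons.injEq] at h5
      exact absurd h5.2 (by simp)

lemma suffix_unique (hinj : Function.Injective m) {w : List Bool} {i j : Fin t}
    (hi : delim (m i) <:+ w) (hj : delim (m j) <:+ w) : i = j := by
  have key : ∀ {a b : Fin t}, m a ≤ m b → delim (m a) <:+ w → delim (m b) <:+ w → a = b := by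
    intro a b hab ha hb
    have : delim (m a) <:+ delim (m b) :=
      List.suffix_of_suffix_length_le ha hb (by simp [delim] <;> omega)
    exact hinj (delim_suffix_delim this)
  rcases le_total (m i) (m j) with h | h
  · exact key h hi hj
  · exact (key h hj hi).symm

lemma decomp_unique (hinj : Function.Injective m) {v v' : List Bool} {i j : Fin t}
    (h : v ++ delim (m i) = v' ++ delim (m j)) : i = j ∧ v = v' := by
  have hij : i = j := suffix_unique hinj
    (h ▸ List.suffix_append v (delim (m i))) (List.suffix_append v' (delim (m j)))
  subst hij
  exact ⟨rfl, List.append_cancel_right h⟩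

lemma code_char (hinj : Function.Injective m) (n : ℕ) (w : List Bool) :
    (w ∈ MultiDelim m ∧ w.length = n) ↔
      ((∃ i, m i + 1 = n ∧ w = shortWord (m i)) ∨
       (∃ i, m i + 2 ≤ n ∧ ∃ v, Stem m v ∧ v.length = n - (m i + 2) ∧
          w = v ++ delim (m i))) := by
  constructor
  · rintro ⟨hmem | ⟨hpre, ⟨i, v, hv⟩, hocc⟩, hlen⟩
    · obtain ⟨i, rfl⟩ := hmem
      refine Or.inl ⟨i, ?_, rfl⟩
      simpa [shortWord] using hlen
    · subst hv
      have hs : Stem m v := stem_of_code v.length v rfl i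
        (fun j => hpre j) (fun j u x hx => hocc j u x hx)
      have hl : (v ++ delim (m i)).length = v.length + (m i + 2) := by
        simp [delim]
        try omega
      refine Or.inr ⟨i, by omega, v, hs, by omega, rfl⟩
  · rintro (⟨i, hn, rfl⟩ | ⟨i, hle, v, hv, hlen, rfl⟩)
    · exact ⟨Or.inl ⟨i, rfl⟩, by simp [shortWord] <;> omega⟩
    · refine ⟨stem_codeword hv i, ?_⟩
      have : (delim (m i)).length = m i + 2 := by simp [delim]
      rw [List.length_append, this]
      omega

def sN {t : ℕ} (m : Fin t → ℕ) (k : ℕ) : ℕ :=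
  (Finset.univ.filter fun i => m i + 1 = k).card

def codeF {t : ℕ} (m : Fin t → ℕ) (n : ℕ) : Finset (List Bool) :=
  ((Finset.univ.filter fun i => m i + 1 = n).image fun i => shortWord (m i)) ∪
  ((Finset.univ.filter fun i => m i + 2 ≤ n).biUnion fun i =>
    (stemF m (n - (m i + 2))).image fun v => v ++ delim (m i))

lemma mem_codeF (n : ℕ) (w : List Bool) :
    w ∈ codeF m n ↔
      ((∃ i, m i + 1 = n ∧ w = shortWord (m i)) ∨
       (∃ i, m i + 2 ≤ n ∧ ∃ v, Stem m v ∧ v.length = n - (m i + 2) ∧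
          w = v ++ delim (m i))) := by
  simp only [codeF, Finset.mem_union, Finset.mem_image, Finset.mem_biUnion,
    Finset.mem_filter, Finset.mem_univ, true_and, mem_stemF]
  constructor
  · rintro (⟨i, hi, rfl⟩ | ⟨i, hi, v, ⟨hv, hvl⟩, rfl⟩)
    · exact Or.inl ⟨i, hi, rfl⟩
    · exact Or.inr ⟨i, hi, v, hv, hvl, rfl⟩
  · rintro (⟨i, hi, rfl⟩ | ⟨i, hi, v, hv, hvl, rfl⟩)
    · exact Or.inl ⟨i, hi, rfl⟩
    · exact Or.inr ⟨i, hi, v, ⟨hv, hvl⟩, rfl⟩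

lemma count_false_delim (k : ℕ) : (delim k).count false = 2 := by
  simp [delim, List.count_cons, List.count_append, List.count_replicate]

lemma count_false_short (k : ℕ) : (shortWord k).count false = 1 := by
  simp [shortWord, List.count_append, List.count_replicate]

lemma fD_eq_card (hinj : Function.Injective m) (n : ℕ) :
    fD m n = (codeF m n).card := by
  rw [fD]
  have hset : {w ∈ MultiDelim m | w.length = n} = ↑(codeF m n) := by
    ext w
    rw [Set.mem_sep_iff, Finset.mem_coe, mem_codeF, ← code_char hinj]
  rw [hset, Set.ncard_coe_finset]

end Count
section Count2
variable {t : ℕ} {m : Fin t → ℕ}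

lemma card_codeF (hinj : Function.Injective m) (n : ℕ) :
    (codeF m n).card
      = sN m n + ∑ i : Fin t, if m i + 2 ≤ n then gS m (n - (m i + 2)) else 0 := by
  rw [codeF, Finset.card_union_of_disjoint]
  · congr 1
    · rw [Finset.card_image_of_injOn, sN]
      intro i _ j _ hij
      have : m i + 1 = m j + 1 := by
        have := congrArg List.length hij
        simpa [shortWord] using this
      exact hinj (by omega)
    · rw [Finset.card_biUnion, Finset.sum_filter]
      · refine Finset.sum_congr rfl fun i _ => ?_
        split
        · rw [Finset.card_image_of_injective _ (fun a b h => List.append_cancel_right h),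
            card_stemF]
        · rfl
      · intro i _ j _ hij
        simp only [Function.onFun]
        rw [Finset.disjoint_left]
        rintro w hw1 hw2
        simp only [Finset.mem_image] at hw1 hw2
        obtain ⟨v, -, rfl⟩ := hw1
        obtain ⟨v', -, he⟩ := hw2
        exact hij (decomp_unique hinj he.symm).1
  · rw [Finset.disjoint_left]
    rintro w hw1 hw2
    simp only [Finset.mem_image] at hw1
    simp only [Finset.mem_biUnion] at hw2
    obtain ⟨i, -, rfl⟩ := hw1
    obtain ⟨j, -, hw2⟩ := hw2
    simp only [Finset.mem_image] at hw2
    obtain ⟨v, -, he⟩ := hw2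
    have h1 : (shortWord (m i)).count false = 1 := count_false_short _
    rw [← he, List.count_append, count_false_delim] at h1
    omega

lemma master (hinj : Function.Injective m) (n : ℕ) :
    fD m n = sN m n + ∑ i : Fin t, if m i + 2 ≤ n then gS m (n - (m i + 2)) else 0 := by
  rw [fD_eq_card hinj, card_codeF hinj]

end Count2
section Series
variable {t : ℕ} {m : Fin t → ℕ}
open PowerSeries

lemma sN_zero : sN m 0 = 0 := by
  rw [sN]
  exact Finset.card_eq_zero.mpr (Finset.filter_eq_empty_iff.mpr (by intro i _; omega))

lemma sN_succ (hinj : Function.Injective m) (a : ℕ) :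
    sN m (a + 1) = if NoRun m a then 0 else 1 := by
  rw [sN]
  have he : (Finset.univ.filter fun i => m i + 1 = a + 1)
      = Finset.univ.filter fun i => m i = a := by
    apply Finset.filter_congr
    intro i _
    constructor <;> (intro h; omega)
  rw [he]
  split
  · next h =>
    rw [Finset.filter_false_of_mem (fun i _ => h i), Finset.card_empty]
  · next h =>
    unfold NoRun at h
    push_neg at h
    obtain ⟨i₀, hi₀⟩ := h
    rw [Finset.card_eq_one]
    refine ⟨i₀, ?_⟩
    ext j
    simp only [Finset.mem_filter, Finset.mem_univ, true_and, Finset.mem_singleton]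
    exact ⟨fun hj => hinj (hj.trans hi₀.symm), fun hj => hj ▸ hi₀⟩

lemma rs_one (hinj : Function.Injective m) (a : ℕ) :
    ((if NoRun m a then 1 else 0) : ℤ) + (sN m (a + 1) : ℤ) = 1 := by
  rw [sN_succ hinj]
  split <;> simp

lemma TD_zero : TD m 0 = 0 := by
  rw [TD]
  rw [Finset.filter_false_of_mem (fun i _ => by omega),
    Finset.filter_false_of_mem (fun i _ => by omega)]
  simp

lemma TD_one (hpos : ∀ i, 0 < m i) : TD m 1 = 0 := by
  rw [TD]
  rw [Finset.filter_false_of_mem (fun i _ => by have := hpos i; omega),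
    Finset.filter_false_of_mem (fun i _ => by omega)]
  simp

lemma TD_succ (k : ℕ) : TD m (k + 1) = sN m (k + 1) + sN m k := by
  rw [TD, sN, sN]
  congr 1
  apply congrArg Finset.card
  apply Finset.filter_congr
  intro i _
  constructor <;> (intro h; omega)

lemma TD_le_two (hinj : Function.Injective m) (j : ℕ) : TD m j ≤ 2 := by
  rw [TD]
  have h1 : (Finset.univ.filter fun i => m i + 1 = j).card ≤ 1 :=
    Finset.card_le_one.mpr (fun a ha b hb => by
      simp only [Finset.mem_filter] at ha hb
      exact hinj (by omega))
  have h2 : (Finset.univ.filter fun i => m i + 2 = j).card ≤ 1 :=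
    Finset.card_le_one.mpr (fun a ha b hb => by
      simp only [Finset.mem_filter] at ha hb
      exact hinj (by omega))
  omega

noncomputable def Sps (m : Fin t → ℕ) : PowerSeries ℤ := PowerSeries.mk fun k => (sN m k : ℤ)
noncomputable def Rps (m : Fin t → ℕ) : PowerSeries ℤ :=
  PowerSeries.mk fun a => if NoRun m a then (1 : ℤ) else 0
noncomputable def Gps (m : Fin t → ℕ) : PowerSeries ℤ := PowerSeries.mk fun d => (gS m d : ℤ)
noncomputable def Fps (m : Fin t → ℕ) : PowerSeries ℤ := PowerSeries.mk fun k => (fD m k : ℤ)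
noncomputable def Tps (m : Fin t → ℕ) : PowerSeries ℤ := PowerSeries.mk fun k => (TD m k : ℤ)
noncomputable def Jps : PowerSeries ℤ := PowerSeries.mk fun _ => (1 : ℤ)

lemma hJ : ((1 : PowerSeries ℤ) - X) * Jps = 1 := by
  have h : Jps = 1 + X * Jps := by
    ext n
    cases n with
    | zero => simp [Jps, PowerSeries.coeff_mk]
    | succ k => simp [Jps, PowerSeries.coeff_mk, PowerSeries.coeff_succ_X_mul]
  linear_combination h

lemma h1 (hinj : Function.Injective m) :
    X * Rps m + Sps m = X + X * (X * Rps m) + X * Sps m := by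
  have hco : ∀ n : ℕ, (PowerSeries.coeff n) X = if n = 1 then (1:ℤ) else 0 :=
    fun n => PowerSeries.coeff_X n
  ext n
  simp only [map_add]
  cases n with
  | zero =>
    simp [PowerSeries.coeff_zero_X_mul, Sps, PowerSeries.coeff_mk, hco, sN_zero]
  | succ k =>
    rw [PowerSeries.coeff_succ_X_mul, PowerSeries.coeff_succ_X_mul,
      PowerSeries.coeff_succ_X_mul]
    cases k with
    | zero =>
      rw [PowerSeries.coeff_zero_X_mul, hco 1, if_pos rfl]
      simp only [Rps, Sps, PowerSeries.coeff_mk, sN_zero, Nat.cast_zero]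
      linarith [rs_one hinj 0]
    | succ l =>
      rw [PowerSeries.coeff_succ_X_mul, hco (l + 1 + 1),
        if_neg (by omega : ¬ (l + 1 + 1) = 1)]
      simp only [Rps, Sps, PowerSeries.coeff_mk]
      linarith [rs_one hinj (l + 1), rs_one hinj l]

lemma h2 : Gps m = Rps m + X * (Rps m * Gps m) := by
  ext n
  cases n with
  | zero =>
    simp only [map_add, PowerSeries.coeff_zero_X_mul, Gps, Rps, PowerSeries.coeff_mk, add_zero]
    rw [gS_eq]
    simp only [Finset.range_zero, Finset.sum_empty, add_zero]
    split <;> simp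
  | succ k =>
    simp only [map_add, PowerSeries.coeff_succ_X_mul, Gps, Rps, PowerSeries.coeff_mk]
    rw [PowerSeries.coeff_mul, Finset.Nat.sum_antidiagonal_eq_sum_range_succ_mk]
    simp only [PowerSeries.coeff_mk, Nat.succ_eq_add_one]
    rw [gS_eq m (k + 1), Nat.cast_add, Nat.cast_sum]
    congr 1
    · split <;> simp
    · refine Finset.sum_congr rfl fun a ha => ?_
      simp only [Finset.mem_range] at ha
      have hk : k + 1 - 1 - a = k - a := by omega
      rw [hk]
      split <;> simp

lemma conv_sum (k : ℕ) :
    ∑ x ∈ Finset.range (k + 1), (sN m x : ℤ) * ((gS m (k - x) : ℕ) : ℤ)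
      = ∑ i : Fin t,
          ((if m i + 2 ≤ k + 1 then gS m (k + 1 - (m i + 2)) else 0 : ℕ) : ℤ) := by
  have hsN : ∀ j : ℕ, (sN m j : ℤ) = ∑ i : Fin t, if m i + 1 = j then 1 else 0 := by
    intro j
    rw [sN, Finset.card_filter]
    push_cast
    rfl
  calc ∑ x ∈ Finset.range (k + 1), (sN m x : ℤ) * ((gS m (k - x) : ℕ) : ℤ)
      = ∑ x ∈ Finset.range (k + 1), ∑ i : Fin t,
          if m i + 1 = x then ((gS m (k - x) : ℕ) : ℤ) else 0 := by
        refine Finset.sum_congr rfl fun a _ => ?_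
        rw [hsN a, Finset.sum_mul]
        refine Finset.sum_congr rfl fun i _ => ?_
        split <;> simp
    _ = ∑ i : Fin t, ∑ x ∈ Finset.range (k + 1),
          if m i + 1 = x then ((gS m (k - x) : ℕ) : ℤ) else 0 := Finset.sum_comm
    _ = ∑ i : Fin t,
          ((if m i + 2 ≤ k + 1 then gS m (k + 1 - (m i + 2)) else 0 : ℕ) : ℤ) := by
        refine Finset.sum_congr rfl fun i _ => ?_
        rw [Finset.sum_ite_eq (Finset.range (k + 1)) (m i + 1)
          (fun x => ((gS m (k - x) : ℕ) : ℤ))]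
        simp only [Finset.mem_range]
        by_cases hc : m i + 2 ≤ k + 1
        · rw [if_pos (by omega : m i + 1 < k + 1), if_pos hc]
          congr 2
          omega
        · rw [if_neg (by omega : ¬ m i + 1 < k + 1), if_neg hc]
          simp

lemma h3 (hinj : Function.Injective m) : Fps m = Sps m + X * (Sps m * Gps m) := by
  ext n
  cases n with
  | zero =>
    simp only [map_add, PowerSeries.coeff_zero_X_mul, Fps, Sps, PowerSeries.coeff_mk, add_zero]
    rw [master hinj 0]
    simp [sN_zero]
  | succ k =>
    simp only [map_add, PowerSeries.coeff_succ_X_mul, Fps, Sps, Gps, PowerSeries.coeff_mk]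
    rw [PowerSeries.coeff_mul, Finset.Nat.sum_antidiagonal_eq_sum_range_succ_mk]
    simp only [PowerSeries.coeff_mk, Nat.succ_eq_add_one]
    rw [master hinj (k + 1), Nat.cast_add, Nat.cast_sum]
    congr 1
    exact (conv_sum k).symm

lemma h4 : Tps m = (1 + X) * Sps m := by
  ext n
  rw [add_mul, one_mul, map_add]
  cases n with
  | zero =>
    simp [Tps, Sps, PowerSeries.coeff_mk, PowerSeries.coeff_zero_X_mul, TD_zero, sN_zero]
  | succ k =>
    rw [PowerSeries.coeff_succ_X_mul]
    simp only [Tps, Sps, PowerSeries.coeff_mk]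
    rw [TD_succ]
    push_cast
    ring

lemma key2 (hinj : Function.Injective m) :
    Fps m + Fps m * Tps m = Tps m + (PowerSeries.C (2 : ℤ)) * X ^ 2 * (Fps m * Jps) := by
  have hh1 := h1 hinj
  have hh2 := h2 (m := m)
  have hh3 := h3 hinj
  have hh4 := h4 (m := m)
  have hhJ := hJ
  have key : Fps m * (1 - X) + Fps m * Tps m * (1 - X)
      = Tps m * (1 - X) + (PowerSeries.C (2 : ℤ)) * X ^ 2 * Fps m := by
    have hC2 : (PowerSeries.C (2 : ℤ)) = (2 : PowerSeries ℤ) := by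
      simp [map_ofNat]
    rw [hC2]
    linear_combination ((1 + X) * Fps m) * hh1 + ((1 + X) * (1 - X) * X * Sps m) * hh2
      + ((1 + X) * (1 - X) * (1 - X * Rps m)) * hh3 + ((1 - X) * (Fps m - 1)) * hh4
  linear_combination Jps * key - (Fps m + Fps m * Tps m - Tps m) * hhJ
end Series
/-- for `0 < m_1 < … < m_t` the codeword counts `f_n` of
`D_{m_1,…,m_t}` satisfy, for every `n ≥ 1`,
`f_n = T_n + ∑_{k=0}^{n-2} (2 - T_{n-k}) f_k`. -/
theorem multiDelim_count_recurrence {t : ℕ} (ht : 0 < t) (m : Fin t → ℕ)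
    (hpos : ∀ i, 0 < m i) (hmono : StrictMono m) (n : ℕ) (hn : 1 ≤ n) :
    fD m n = TD m n + ∑ k ∈ Finset.range (n - 1), (2 - TD m (n - k)) * fD m k := by
  have hinj := hmono.injective
  by_cases h1n : n = 1
  · subst h1n
    have hf1 : fD m 1 = 0 := by
      rw [master hinj 1, sN,
        Finset.filter_false_of_mem (fun i _ => by have := hpos i; omega)]
      rw [Finset.card_empty, Finset.sum_eq_zero (fun i _ => if_neg (by omega))]
      rfl
    rw [hf1, TD_one hpos]
    simp
  · obtain ⟨p, rfl⟩ : ∃ p, n = p + 2 := ⟨n - 2, by omega⟩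
    have hk := congrArg (PowerSeries.coeff (R := ℤ) (p + 2)) (key2 hinj)
    rw [mul_assoc] at hk
    simp only [map_add, PowerSeries.coeff_C_mul] at hk
    rw [PowerSeries.coeff_X_pow_mul] at hk
    simp only [PowerSeries.coeff_mul,
      Finset.Nat.sum_antidiagonal_eq_sum_range_succ_mk, Nat.succ_eq_add_one] at hk
    simp only [Fps, Tps, Jps, PowerSeries.coeff_mk, mul_one] at hk
    rw [Finset.sum_range_succ, Finset.sum_range_succ] at hk
    have i1 : p + 2 - (p + 1) = 1 := by omega
    have i2 : p + 2 - (p + 2) = 0 := by omega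
    rw [i1, i2, TD_one hpos, TD_zero] at hk
    push_cast at hk
    -- hk : ↑f(p+2) + (∑ k ∈ range (p+1), ↑f k * ↑T (p+2-k) + f(p+1)*0 + f(p+2)*0)
    --      = ↑T(p+2) + 2 * ∑ k ∈ range (p+1), ↑f k
    have hgoal : ((p : ℕ) + 2) - 1 = p + 1 := by omega
    rw [hgoal]
    rw [← Nat.cast_inj (R := ℤ)]
    push_cast [Nat.cast_sum]
    have hterm : ∀ k ∈ Finset.range (p + 1),
        (((2 - TD m (p + 2 - k)) : ℕ) : ℤ) * (fD m k : ℤ)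
          = ((2 : ℤ) - (TD m (p + 2 - k) : ℤ)) * (fD m k : ℤ) := by
      intro k _
      have h2 := TD_le_two hinj (p + 2 - k)
      rw [Nat.cast_sub h2]
      norm_num
    rw [Finset.sum_congr rfl hterm]
    have e3 : ∑ k ∈ Finset.range (p + 1),
        ((2 : ℤ) - (TD m (p + 2 - k) : ℤ)) * (fD m k : ℤ)
        = 2 * (∑ k ∈ Finset.range (p + 1), (fD m k : ℤ))
          - ∑ k ∈ Finset.range (p + 1), (fD m k : ℤ) * (TD m (p + 2 - k) : ℤ) := by
      rw [Finset.mul_sum, ← Finset.sum_sub_distrib]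
      exact Finset.sum_congr rfl fun k _ => by ring
    rw [e3]
    linarith [hk]
end
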